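/- If y_1, ..., y_n are real numbers in (0,1) with y_1 + ... + y_n = n - 1, then (y_1·y_2···y_n) / (y_1(1-y_1) + ... + y_n(1-y_n)) ≤ 1/2. -/
import Mathlib


open Finset

lemma bonferroni_aux {ι : Type*} (s : Finset ι) (x : ι → ℝ)
    (h0 : ∀ i ∈ s, 0 ≤ x i) (h1 : ∀ i ∈ s, x i ≤ 1) :
    ∏ i ∈ s, (1 - x i) ≤
      1 - ∑ i ∈ s, x i + ((∑ i ∈ s, x i) ^ 2 - ∑ i ∈ s, (x i) ^ 2) / 2 := by
  induction s using Finset.cons_induction with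
  | empty => simp
  | cons a t hat ih =>
    simp only [Finset.prod_cons, Finset.sum_cons]
    have ha0 : 0 ≤ x a := h0 a (Finset.mem_cons_self a t)
    have ha1 : x a ≤ 1 := h1 a (Finset.mem_cons_self a t)
    have IH := ih (fun i hi => h0 i (Finset.mem_cons_of_mem hi))
      (fun i hi => h1 i (Finset.mem_cons_of_mem hi))
    have hST : ∑ i ∈ t, (x i) ^ 2 ≤ (∑ i ∈ t, x i) ^ 2 :=
      Finset.sum_sq_le_sq_sum_of_nonneg (fun i hi => h0 i (Finset.mem_cons_of_mem hi))
    nlinarith [mul_le_mul_of_nonneg_left IH (by linarith : (0:ℝ) ≤ 1 - x a),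
      mul_nonneg ha0 (sub_nonneg.2 hST)]

theorem overlap_sq_le_half (n : ℕ) (y : Fin n → ℝ)
    (hy : ∀ i, y i ∈ Set.Ioo (0 : ℝ) 1)
    (hsum : ∑ i, y i = (n : ℝ) - 1)
    (hden : 0 < ∑ i, y i * (1 - y i)) :
    (∏ i, y i) / (∑ i, y i * (1 - y i)) ≤ 1 / 2 := by
  set x : Fin n → ℝ := fun i => 1 - y i with hx
  have hxsum : ∑ i, x i = 1 := by
    simp only [hx, Finset.sum_sub_distrib, Finset.sum_const, Finset.card_univ,
      Fintype.card_fin, nsmul_eq_mul, mul_one, hsum]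
    ring
  have key := bonferroni_aux Finset.univ x
    (fun i _ => by have := hy i; simp [hx]; linarith [this.2])
    (fun i _ => by have := hy i; simp [hx]; linarith [this.1])
  have hprod : ∏ i, (1 - x i) = ∏ i, y i := by simp [hx]
  have hd : ∑ i, y i * (1 - y i) = 1 - ∑ i, (x i) ^ 2 := by
    have : ∑ i, y i * (1 - y i) = ∑ i, (x i - (x i) ^ 2) :=
      Finset.sum_congr rfl fun i _ => by simp only [hx]; ring
    rw [this, Finset.sum_sub_distrib, hxsum]
  rw [div_le_iff₀ hden]
  rw [hprod, hxsum] at key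
  rw [hd]
  nlinarith [key]
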